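/- The conformal map from the wedge to the unit double cone: the map φ(x) = −(x + ½e₃)/q(x + ½e₃) − e₃ (which is well defined on W since q(x + ½e₃) < 0 there) is injective on W and maps W onto the open double cone of radius 1 centered at the origin, φ(W) = O₁ = {x ∈ ℝ⁴ : |x₀| + √(x₁² + x₂² + x₃²) < 1}. -/

import Mathlib

/-- Minkowski square on ℝ⁴. -/
noncomputable def q (x : Fin 4 → ℝ) : ℝ := x 0 ^ 2 - x 1 ^ 2 - x 2 ^ 2 - x 3 ^ 2

/-- The open right wedge in ℝ⁴. -/
def W : Set (Fin 4 → ℝ) := {x | x 3 > |x 0|}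

/-- The unit vector in the 3-direction. -/
noncomputable def e3 : Fin 4 → ℝ := ![0, 0, 0, 1]

/-- The conformal map `φ(x) = ρ(x + ½e₃) − e₃` with `ρ(y) = −y/q(y)`. -/
noncomputable def φ (x : Fin 4 → ℝ) : Fin 4 → ℝ :=
  (-(q (x + (1/2 : ℝ) • e3))⁻¹) • (x + (1/2 : ℝ) • e3) - e3

/-- The open unit double cone centered at the origin. -/
noncomputable def O₁ : Set (Fin 4 → ℝ) :=
  {x | |x 0| + Real.sqrt (x 1 ^ 2 + x 2 ^ 2 + x 3 ^ 2) < 1}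

/-- The inverse conformal map. -/
noncomputable def ψ (u : Fin 4 → ℝ) : Fin 4 → ℝ :=
  (-(q (u + e3))⁻¹) • (u + e3) - (1/2 : ℝ) • e3

lemma q_smul (c : ℝ) (y : Fin 4 → ℝ) : q (c • y) = c ^ 2 * q y := by
  simp only [q, Pi.smul_apply, smul_eq_mul]; ring

lemma rho_rho (y : Fin 4 → ℝ) (h : q y ≠ 0) :
    (-(q ((-(q y)⁻¹) • y))⁻¹) • ((-(q y)⁻¹) • y) = y := by
  rw [q_smul, smul_smul]
  have : -((-(q y)⁻¹) ^ 2 * q y)⁻¹ * (-(q y)⁻¹) = 1 := by field_simp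
  rw [this, one_smul]

lemma psi_phi (x : Fin 4 → ℝ) (h : q (x + (1/2 : ℝ) • e3) ≠ 0) : ψ (φ x) = x := by
  unfold ψ φ
  rw [sub_add_cancel, rho_rho _ h, add_sub_cancel_right]

lemma phi_psi (u : Fin 4 → ℝ) (h : q (u + e3) ≠ 0) : φ (ψ u) = u := by
  unfold ψ φ
  rw [sub_add_cancel, rho_rho _ h, add_sub_cancel_right]

lemma qW_expand (x : Fin 4 → ℝ) :
    q (x + (1/2 : ℝ) • e3) = x 0 ^ 2 - x 1 ^ 2 - x 2 ^ 2 - (x 3 + 1/2) ^ 2 := by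
  simp only [q, Pi.add_apply, Pi.smul_apply, smul_eq_mul,
    show e3 0 = (0:ℝ) from rfl, show e3 1 = (0:ℝ) from rfl,
    show e3 2 = (0:ℝ) from rfl, show e3 3 = (1:ℝ) from rfl]
  ring

lemma qW_neg (x : Fin 4 → ℝ) (hx : x ∈ W) : q (x + (1/2 : ℝ) • e3) < 0 := by
  have hx' : |x 0| < x 3 := hx
  rw [qW_expand]
  nlinarith [sq_nonneg (x 1), sq_nonneg (x 2), abs_nonneg (x 0), sq_abs (x 0)]

lemma phi_mem (x : Fin 4 → ℝ) (hx : x ∈ W) : φ x ∈ O₁ := by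
  have hx' : |x 0| < x 3 := hx
  have ha : (0:ℝ) ≤ |x 0| := abs_nonneg _
  have ha2 : |x 0| ^ 2 = x 0 ^ 2 := sq_abs _
  set Q := q (x + (1/2 : ℝ) • e3) with hQdef
  have hQ : Q = x 0 ^ 2 - x 1 ^ 2 - x 2 ^ 2 - (x 3 + 1/2) ^ 2 := qW_expand x
  have hQneg : Q < 0 := qW_neg x hx
  have hQne : Q ≠ 0 := ne_of_lt hQneg
  set s : ℝ := -Q⁻¹ with hs
  have hspos : 0 < s := by rw [hs, neg_pos]; exact inv_lt_zero.mpr hQneg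
  have hsQ : s * Q = -1 := by rw [hs, neg_mul, inv_mul_cancel₀ hQne]
  clear_value s
  clear_value Q
  have h0 : φ x 0 = s * x 0 := by
    simp only [φ, Pi.sub_apply, Pi.smul_apply, Pi.add_apply, smul_eq_mul, ← hQdef, ← hs,
      show e3 0 = (0:ℝ) from rfl]
    ring
  have h1 : φ x 1 = s * x 1 := by
    simp only [φ, Pi.sub_apply, Pi.smul_apply, Pi.add_apply, smul_eq_mul, ← hQdef, ← hs,
      show e3 1 = (0:ℝ) from rfl]
    ring
  have h2 : φ x 2 = s * x 2 := by
    simp only [φ, Pi.sub_apply, Pi.smul_apply, Pi.add_apply, smul_eq_mul, ← hQdef, ← hs,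
      show e3 2 = (0:ℝ) from rfl]
    ring
  have h3 : φ x 3 = s * (x 3 + 1/2) - 1 := by
    simp only [φ, Pi.sub_apply, Pi.smul_apply, Pi.add_apply, smul_eq_mul, ← hQdef, ← hs,
      show e3 3 = (1:ℝ) from rfl]
    ring
  have habs : |φ x 0| = s * |x 0| := by rw [h0, abs_mul, abs_of_pos hspos]
  have hlt : |x 0| < -Q := by
    rw [hQ]; nlinarith [sq_nonneg (x 1), sq_nonneg (x 2)]
  have key1 : s * |x 0| < 1 := by nlinarith [mul_lt_mul_of_pos_left hlt hspos]
  have h2sQ : s ^ 2 * Q = -s := by rw [sq, mul_assoc, hsQ]; ring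
  rw [hQ] at h2sQ
  have hid : (1 - s * |x 0|) ^ 2 - ((s * x 1) ^ 2 + (s * x 2) ^ 2 + (s * (x 3 + 1/2) - 1) ^ 2)
      = 2 * s * (x 3 - |x 0|) := by
    linear_combination h2sQ + s ^ 2 * ha2
  have key2 : φ x 1 ^ 2 + φ x 2 ^ 2 + φ x 3 ^ 2 < (1 - s * |x 0|) ^ 2 := by
    rw [h1, h2, h3]
    nlinarith [hid, mul_pos hspos (sub_pos.mpr hx')]
  have hsq : Real.sqrt (φ x 1 ^ 2 + φ x 2 ^ 2 + φ x 3 ^ 2) < 1 - s * |x 0| :=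
    (Real.sqrt_lt' (by linarith)).mpr key2
  show |φ x 0| + Real.sqrt (φ x 1 ^ 2 + φ x 2 ^ 2 + φ x 3 ^ 2) < 1
  rw [habs]; linarith

lemma qO_expand (u : Fin 4 → ℝ) :
    q (u + e3) = u 0 ^ 2 - u 1 ^ 2 - u 2 ^ 2 - (u 3 + 1) ^ 2 := by
  simp only [q, Pi.add_apply,
    show e3 0 = (0:ℝ) from rfl, show e3 1 = (0:ℝ) from rfl,
    show e3 2 = (0:ℝ) from rfl, show e3 3 = (1:ℝ) from rfl]
  ring

lemma O_sqrt_facts (u : Fin 4 → ℝ) (hu : u ∈ O₁) :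
    u 1 ^ 2 + u 2 ^ 2 + u 3 ^ 2 < (1 - |u 0|) ^ 2 ∧ |u 0| + |u 3| < 1 := by
  have hu' : |u 0| + Real.sqrt (u 1 ^ 2 + u 2 ^ 2 + u 3 ^ 2) < 1 := hu
  set R := u 1 ^ 2 + u 2 ^ 2 + u 3 ^ 2 with hR
  have hRnn : 0 ≤ R := by positivity
  have hsqR : Real.sqrt R ^ 2 = R := Real.sq_sqrt hRnn
  have hs3 : |u 3| ≤ Real.sqrt R := by
    rw [← Real.sqrt_sq_eq_abs]
    exact Real.sqrt_le_sqrt (by nlinarith [sq_nonneg (u 1), sq_nonneg (u 2)])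
  constructor
  · nlinarith [Real.sqrt_nonneg R, abs_nonneg (u 0)]
  · linarith

lemma qO_neg (u : Fin 4 → ℝ) (hu : u ∈ O₁) : q (u + e3) < 0 := by
  obtain ⟨h1, h2⟩ := O_sqrt_facts u hu
  rw [qO_expand]
  nlinarith [abs_nonneg (u 0), abs_nonneg (u 3), sq_abs (u 0), sq_abs (u 3),
    neg_abs_le (u 3), sq_nonneg (u 1), sq_nonneg (u 2)]

lemma psi_mem (u : Fin 4 → ℝ) (hu : u ∈ O₁) : ψ u ∈ W := by
  obtain ⟨hkey, hot⟩ := O_sqrt_facts u hu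
  have ha : (0:ℝ) ≤ |u 0| := abs_nonneg _
  have ha2 : |u 0| ^ 2 = u 0 ^ 2 := sq_abs _
  set P := q (u + e3) with hPdef
  have hP : P = u 0 ^ 2 - u 1 ^ 2 - u 2 ^ 2 - (u 3 + 1) ^ 2 := qO_expand u
  have hPneg : P < 0 := qO_neg u hu
  have hPne : P ≠ 0 := ne_of_lt hPneg
  set t : ℝ := -P⁻¹ with ht
  have htpos : 0 < t := by rw [ht, neg_pos]; exact inv_lt_zero.mpr hPneg
  have htP : t * P = -1 := by rw [ht, neg_mul, inv_mul_cancel₀ hPne]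
  clear_value t
  clear_value P
  have h0 : ψ u 0 = t * u 0 := by
    simp only [ψ, Pi.sub_apply, Pi.smul_apply, Pi.add_apply, smul_eq_mul, ← hPdef, ← ht,
      show e3 0 = (0:ℝ) from rfl]
    ring
  have h3 : ψ u 3 = t * (u 3 + 1) - 1/2 := by
    simp only [ψ, Pi.sub_apply, Pi.smul_apply, Pi.add_apply, smul_eq_mul, ← hPdef, ← ht,
      show e3 3 = (1:ℝ) from rfl]
    ring
  show ψ u 3 > |ψ u 0|
  have habs : |ψ u 0| = t * |u 0| := by rw [h0, abs_mul, abs_of_pos htpos]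
  rw [habs, h3]
  have key3 : 2 * |u 0| < 2 * (u 3 + 1) + P := by
    rw [hP]; nlinarith
  nlinarith [mul_lt_mul_of_pos_left key3 htpos, htP]

/-- The conformal map `φ` is injective on the wedge `W` and maps it onto the open
unit double cone `O₁`. -/
theorem conformal_map_wedge_to_double_cone :
    Set.InjOn φ W ∧ φ '' W = O₁ := by
  constructor
  · intro x hx x' hx' h
    have h1 := psi_phi x (ne_of_lt (qW_neg x hx))
    have h2 := psi_phi x' (ne_of_lt (qW_neg x' hx'))
    rw [← h1, ← h2, h]
  · ext u
    constructor
    · rintro ⟨x, hx, rfl⟩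
      exact phi_mem x hx
    · intro hu
      exact ⟨ψ u, psi_mem u hu, phi_psi u (ne_of_lt (qO_neg u hu))⟩
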